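/- Let λ_{0−} be a constant with 0 < λ_{0−} ≤ λ_0, let (A, B, C, D, E) be part of the Riccati solution, and define f_{0−} := −ε_0⁻¹(A_0 + λ_{0−}B_0), g_{0−} := −ε_0⁻¹(B_0 + λ_{0−}C_0), h_{0−} := −ε_0⁻¹(D_0 + λ_{0−}E_0), and η_{0−} := −ε_0⁻¹(1 − λ_{0−}/λ_0). Then g_{0−} + η_{0−} < 0 and r := −f_{0−} − λ_{0−}(g_{0−} + η_{0−}) > 0. If moreover β_t + γ̇_t > 0 for all t ∈ [0, T], then −f_{0−} + h_{0−} > 0. -/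

import Mathlib

open Set MeasureTheory Matrix Filter Topology

/-- If `f t = 0`, `f ≥ 0` on `(t,b)` with `t < b`, then the derivative at `t` is `≥ 0`. -/
lemma aux_deriv_nonneg_right {f : ℝ → ℝ} {f' t b : ℝ} (hd : HasDerivAt f f' t)
    (htb : t < b) (h0 : f t = 0) (hpos : ∀ s ∈ Set.Ioo t b, 0 ≤ f s) : 0 ≤ f' := by
  have h2 : Tendsto (slope f t) (𝓝[>] t) (𝓝 f') :=
    (hasDerivAt_iff_tendsto_slope.1 hd).mono_left
      (nhdsWithin_mono t (fun x hx => ne_of_gt hx))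
  refine ge_of_tendsto h2 ?_
  filter_upwards [Ioo_mem_nhdsGT_of_mem ⟨le_refl t, htb⟩] with s hs
  rw [slope_def_field]
  have : 0 < s - t := by linarith [hs.1]
  exact div_nonneg (by simpa [h0] using hpos s hs) this.le

lemma aux_deriv_nonpos_right {f : ℝ → ℝ} {f' t b : ℝ} (hd : HasDerivAt f f' t)
    (htb : t < b) (h0 : f t = 0) (hneg : ∀ s ∈ Set.Ioo t b, f s ≤ 0) : f' ≤ 0 := by
  have := aux_deriv_nonneg_right (f := fun s => -f s) (f' := -f') hd.neg htb
    (by simp [h0]) (fun s hs => by simpa using hneg s hs)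
  linarith

/-- If `f b = 0` and `f' b < 0`, then `f > 0` on some `(a,b)` with `a < b`. -/
lemma aux_pos_left_of_deriv_neg {f : ℝ → ℝ} {f' b : ℝ} (hd : HasDerivAt f f' b)
    (h0 : f b = 0) (hneg : f' < 0) : ∃ a, a < b ∧ ∀ s ∈ Set.Ioo a b, 0 < f s := by
  have h2 : Tendsto (slope f b) (𝓝[<] b) (𝓝 f') :=
    (hasDerivAt_iff_tendsto_slope.1 hd).mono_left
      (nhdsWithin_mono b (fun x hx => ne_of_lt hx))
  have hev : ∀ᶠ s in 𝓝[<] b, slope f b s < 0 := h2.eventually_lt_const hneg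
  rcases mem_nhdsLT_iff_exists_Ioo_subset.1 hev with ⟨a, hab, ha⟩
  refine ⟨a, hab, fun s hs => ?_⟩
  have hsl : slope f b s < 0 := ha hs
  rw [slope_def_field, h0] at hsl
  have hsb : s - b < 0 := by linarith [hs.2]
  by_contra hfs
  push_neg at hfs
  have : 0 ≤ (f s - 0) / (s - b) :=
    div_nonneg_iff.2 (Or.inr ⟨by linarith, hsb.le⟩)
  linarith

/-- Continuity version: if `f T > 0` then `f > 0` on some `(a,T)`. -/
lemma aux_pos_left_of_pos {f : ℝ → ℝ} {T : ℝ} (hT : 0 < T)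
    (hc : ContinuousWithinAt f (Set.Icc 0 T) T) (h0 : 0 < f T) :
    ∃ a, a < T ∧ ∀ s ∈ Set.Ioo a T, 0 < f s := by
  have h1 : Tendsto f (𝓝[Set.Ioo 0 T] T) (𝓝 (f T)) :=
    hc.mono_left (nhdsWithin_mono T Set.Ioo_subset_Icc_self)
  rw [nhdsWithin_Ioo_eq_nhdsLT hT] at h1
  have hev : ∀ᶠ s in 𝓝[<] T, 0 < f s := h1.eventually_const_lt h0
  rcases mem_nhdsLT_iff_exists_Ioo_subset.1 hev with ⟨a, hab, ha⟩
  exact ⟨max a 0, max_lt hab hT, fun s hs => ha ⟨lt_of_le_of_lt (le_max_left a 0) hs.1, hs.2⟩⟩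

/-- Backward propagation of strict positivity on `[0,T)`. -/
lemma aux_backward_pos {f : ℝ → ℝ} {T a : ℝ}
    (hf : ContinuousOn f (Set.Icc 0 T))
    (ha0 : 0 ≤ a) (haT : a < T) (hnear : ∀ s ∈ Set.Ioo a T, 0 < f s)
    (hstep : ∀ t, 0 ≤ t → t < T → f t = 0 → (∀ s ∈ Set.Ioo t T, 0 < f s) → False) :
    ∀ t, 0 ≤ t → t < T → 0 < f t := by
  by_contra hcon
  push_neg at hcon
  obtain ⟨t₀, ht₀0, ht₀T, ht₀⟩ := hcon
  set S : Set ℝ := {t | t ∈ Set.Icc 0 a ∧ f t ≤ 0} with hS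
  have ht₀a : t₀ ≤ a := by
    by_contra h
    push_neg at h
    exact absurd (hnear t₀ ⟨h, ht₀T⟩) (by linarith)
  have ht₀S : t₀ ∈ S := ⟨⟨ht₀0, ht₀a⟩, ht₀⟩
  have hne : S.Nonempty := ⟨t₀, ht₀S⟩
  have hbdd : BddAbove S := ⟨a, fun x hx => hx.1.2⟩
  set t₁ := sSup S with ht₁
  have ht₁mem : t₁ ∈ Set.Icc 0 a :=
    ⟨le_trans ht₀0 (le_csSup hbdd ht₀S), csSup_le hne fun x hx => hx.1.2⟩
  have ht₁T : t₁ < T := lt_of_le_of_lt ht₁mem.2 haT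
  have ht₁Icc : t₁ ∈ Set.Icc 0 T := ⟨ht₁mem.1, ht₁T.le⟩
  -- f is positive strictly to the right of t₁
  have hright : ∀ s ∈ Set.Ioo t₁ T, 0 < f s := by
    intro s hs
    rcases le_or_gt s a with h | h
    · by_contra hfs
      push_neg at hfs
      have : s ∈ S := ⟨⟨le_trans ht₁mem.1 hs.1.le, h⟩, hfs⟩
      exact absurd (le_csSup hbdd this) (not_le.2 hs.1)
    · exact hnear s ⟨h, hs.2⟩
  -- f t₁ ≤ 0
  have hle : f t₁ ≤ 0 := by
    by_contra hpos
    push_neg at hpos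
    have hcw : ContinuousWithinAt f (Set.Icc 0 T) t₁ := hf t₁ ht₁Icc
    have hev : ∀ᶠ s in 𝓝[Set.Icc 0 T] t₁, 0 < f s := hcw.eventually_const_lt hpos
    rcases Metric.mem_nhdsWithin_iff.1 hev with ⟨ε, hε, hball⟩
    obtain ⟨s, hsS, hst⟩ := exists_lt_of_lt_csSup hne (by linarith : t₁ - ε < t₁)
    have hs' : s ∈ Metric.ball t₁ ε ∩ Set.Icc 0 T := by
      constructor
      · rw [Metric.mem_ball, Real.dist_eq, abs_lt]
        have := le_csSup hbdd hsS
        constructor <;> linarith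
      · exact ⟨hsS.1.1, le_trans hsS.1.2 haT.le⟩
    exact absurd (hball hs') (not_lt.2 hsS.2)
  -- f t₁ ≥ 0
  have hge : 0 ≤ f t₁ := by
    have hcw : Tendsto f (𝓝[Set.Ioo t₁ T] t₁) (𝓝 (f t₁)) :=
      (hf t₁ ht₁Icc).mono_left (nhdsWithin_mono t₁
        (fun x hx => ⟨le_trans ht₁mem.1 hx.1.le, hx.2.le⟩))
    rw [nhdsWithin_Ioo_eq_nhdsGT ht₁T] at hcw
    exact ge_of_tendsto hcw (by
      filter_upwards [Ioo_mem_nhdsGT_of_mem ⟨le_refl t₁, ht₁T⟩] with s hs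
      exact (hright s hs).le)
  exact hstep t₁ ht₁mem.1 ht₁T (le_antisymm hle hge) hright

/-- a pair of functions satisfying a linear ODE-type bound, vanishing at `a`, vanishes on `[a,b]`. -/
lemma aux_pair_eq_zero {x y x' y' : ℝ → ℝ} {a b K : ℝ}
    (hx : ∀ t ∈ Set.Icc a b, HasDerivAt x (x' t) t)
    (hy : ∀ t ∈ Set.Icc a b, HasDerivAt y (y' t) t)
    (hbd : ∀ t ∈ Set.Icc a b, |x' t| ≤ K * max |x t| |y t| ∧ |y' t| ≤ K * max |x t| |y t|)
    (hxa : x a = 0) (hya : y a = 0) : ∀ t ∈ Set.Icc a b, x t = 0 ∧ y t = 0 := by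
  set f : ℝ → ℝ × ℝ := fun t => (x t, y t) with hf
  have hcont : ContinuousOn f (Set.Icc a b) := fun t ht =>
    (((hx t ht).continuousAt.prodMk (hy t ht).continuousAt)).continuousWithinAt
  have hderiv : ∀ t ∈ Set.Ico a b, HasDerivWithinAt f (x' t, y' t) (Set.Ici t) t :=
    fun t ht => (((hx t (Set.Ico_subset_Icc_self ht)).prodMk
      (hy t (Set.Ico_subset_Icc_self ht)))).hasDerivWithinAt
  have hfa : ‖f a‖ ≤ 0 := by simp [hf, hxa, hya, Prod.norm_def]
  have hbound : ∀ t ∈ Set.Ico a b, ‖(x' t, y' t)‖ ≤ K * ‖f t‖ + 0 := by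
    intro t ht
    have h := hbd t (Set.Ico_subset_Icc_self ht)
    rw [Prod.norm_def, Prod.norm_def]
    simp only [Real.norm_eq_abs, add_zero]
    exact max_le h.1 h.2
  have := norm_le_gronwallBound_of_norm_deriv_right_le hcont hderiv hfa hbound
  intro t ht
  have h0 := this t ht
  rw [gronwallBound_ε0_δ0] at h0
  have : ‖f t‖ = 0 := le_antisymm h0 (norm_nonneg _)
  rw [Prod.norm_def] at this
  simp only [Real.norm_eq_abs] at this
  constructor
  · have : |x t| ≤ 0 := le_trans (le_max_left _ _) this.le
    exact abs_eq_zero.1 (le_antisymm this (abs_nonneg _))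
  · have h2 : |y t| ≤ 0 := le_trans (le_max_right _ _) this.le
    exact abs_eq_zero.1 (le_antisymm h2 (abs_nonneg _))

/-- bound for a linear combination. -/
lemma aux_lin_bound {c₁ c₂ x y K₁ K₂ : ℝ} (h₁ : |c₁| ≤ K₁) (h₂ : |c₂| ≤ K₂) :
    |c₁ * x + c₂ * y| ≤ (K₁ + K₂) * max |x| |y| := by
  have hx : |x| ≤ max |x| |y| := le_max_left _ _
  have hy : |y| ≤ max |x| |y| := le_max_right _ _
  have hm : 0 ≤ max |x| |y| := le_trans (abs_nonneg x) hx
  calc |c₁ * x + c₂ * y| ≤ |c₁| * |x| + |c₂| * |y| := by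
        rw [← abs_mul, ← abs_mul]; exact abs_add_le _ _
    _ ≤ K₁ * max |x| |y| + K₂ * max |x| |y| := by
        gcongr <;> [exact le_trans (abs_nonneg _) h₁; exact le_trans (abs_nonneg _) h₂]
    _ = (K₁ + K₂) * max |x| |y| := by ring

/-- Market parameters: time horizon `T > 0` and bounded measurable coefficient functions
`β, λ, ε, θ, σ : [0,T] → ℝ` with `β > 0`, `σ ≥ 0`, `λ` and `ε` positive and bounded away
from zero, `λ` differentiable with bounded derivative `lam'`, and the no-arbitrage
condition `2β_t + γ̇_t > 0` where `γ = log λ` (so `γ̇ = λ'/λ`). -/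
structure Params where
  T : ℝ
  beta : ℝ → ℝ
  lam : ℝ → ℝ
  lam' : ℝ → ℝ
  eps : ℝ → ℝ
  theta : ℝ → ℝ
  sigma : ℝ → ℝ
  hT : 0 < T
  hbeta_meas : Measurable beta
  htheta_meas : Measurable theta
  hsigma_meas : Measurable sigma
  heps_meas : Measurable eps
  hbeta_bdd : ∃ M, ∀ t ∈ Icc 0 T, |beta t| ≤ M
  htheta_bdd : ∃ M, ∀ t ∈ Icc 0 T, |theta t| ≤ M
  hsigma_bdd : ∃ M, ∀ t ∈ Icc 0 T, |sigma t| ≤ M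
  hbeta_pos : ∀ t ∈ Icc 0 T, 0 < beta t
  hsigma_nonneg : ∀ t ∈ Icc 0 T, 0 ≤ sigma t
  heps_lb : ∃ c, 0 < c ∧ ∀ t ∈ Icc 0 T, c ≤ eps t
  heps_ub : ∃ M, ∀ t ∈ Icc 0 T, eps t ≤ M
  hlam_lb : ∃ c, 0 < c ∧ ∀ t ∈ Icc 0 T, c ≤ lam t
  hlam_ub : ∃ M, ∀ t ∈ Icc 0 T, lam t ≤ M
  hlam_deriv : ∀ t, HasDerivAt lam (lam' t) t
  hlam'_bdd : ∃ M, ∀ t, |lam' t| ≤ M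
  hnoarb : ∀ t ∈ Icc 0 T, 0 < 2 * beta t + lam' t / lam t

/-- `γ̇_t = λ'_t / λ_t`, the derivative of `γ = log λ`. -/
noncomputable def gammaDot (P : Params) (t : ℝ) : ℝ := P.lam' t / P.lam t

/-- The backward Riccati ODE system on `[0,T]` with its terminal conditions. -/
def IsRiccatiSol (P : Params) (A B C D E F K : ℝ → ℝ) : Prop :=
  (∀ t ∈ Icc (0:ℝ) P.T,
      HasDerivAt A ((P.eps t)⁻¹ * (A t + P.lam t * B t) ^ 2) t) ∧
  A P.T = P.lam P.T ∧
  (∀ t ∈ Icc (0:ℝ) P.T,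
      HasDerivAt B ((P.eps t)⁻¹ * (A t + P.lam t * B t) * (B t + P.lam t * C t)
        + P.beta t * B t) t) ∧
  B P.T = -1 ∧
  (∀ t ∈ Icc (0:ℝ) P.T,
      HasDerivAt C ((P.eps t)⁻¹ * (B t + P.lam t * C t) ^ 2 + 2 * P.beta t * C t
        - (P.lam t)⁻¹ * (2 * P.beta t + gammaDot P t)) t) ∧
  C P.T = (P.lam P.T)⁻¹ ∧
  (∀ t ∈ Icc (0:ℝ) P.T,
      HasDerivAt D ((P.eps t)⁻¹ * (A t + P.lam t * B t) * (D t + P.lam t * E t)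
        - P.theta t * (A t - D t)) t) ∧
  D P.T = 0 ∧
  (∀ t ∈ Icc (0:ℝ) P.T,
      HasDerivAt E ((P.eps t)⁻¹ * (B t + P.lam t * C t) * (D t + P.lam t * E t)
        - P.theta t * (B t - E t) + P.beta t * E t) t) ∧
  E P.T = 0 ∧
  (∀ t ∈ Icc (0:ℝ) P.T,
      HasDerivAt F ((P.eps t)⁻¹ * (D t + P.lam t * E t) ^ 2
        - 2 * P.theta t * (D t - F t)) t) ∧
  F P.T = 0 ∧
  (∀ t ∈ Icc (0:ℝ) P.T,
      HasDerivAt K (-(P.sigma t) ^ 2 * (A t - 2 * D t + F t) / 2) t) ∧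
  K P.T = 0

set_option maxHeartbeats 4000000 in
/-- With `0 < λ_{0−} ≤ λ_0` and
`f_{0−} = −ε_0⁻¹(A_0 + λ_{0−}B_0)`, `g_{0−} = −ε_0⁻¹(B_0 + λ_{0−}C_0)`,
`h_{0−} = −ε_0⁻¹(D_0 + λ_{0−}E_0)`, `η_{0−} = −ε_0⁻¹(1 − λ_{0−}/λ_0)`:
`g_{0−} + η_{0−} < 0` and `r := −f_{0−} − λ_{0−}(g_{0−} + η_{0−}) > 0`; if moreover
`β_t + γ̇_t > 0` on `[0,T]`, then `−f_{0−} + h_{0−} > 0`. -/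
theorem opening_auction_coefficients (P : Params)
    (A B C D E F K : ℝ → ℝ) (hsol : IsRiccatiSol P A B C D E F K)
    (lam0m : ℝ) (hlam0m_pos : 0 < lam0m) (hlam0m_le : lam0m ≤ P.lam 0)
    (f0m g0m h0m eta0m r : ℝ)
    (hf0m : f0m = -(P.eps 0)⁻¹ * (A 0 + lam0m * B 0))
    (hg0m : g0m = -(P.eps 0)⁻¹ * (B 0 + lam0m * C 0))
    (hh0m : h0m = -(P.eps 0)⁻¹ * (D 0 + lam0m * E 0))
    (heta0m : eta0m = -(P.eps 0)⁻¹ * (1 - lam0m / P.lam 0))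
    (hr : r = -f0m - lam0m * (g0m + eta0m)) :
    g0m + eta0m < 0 ∧ 0 < r ∧
    ((∀ t ∈ Icc (0:ℝ) P.T, 0 < P.beta t + gammaDot P t) → 0 < -f0m + h0m) := by
  obtain ⟨hA, hAT, hB, hBT, hC, hCT, hD, hDT, hE, hET, hF, hFT, hK, hKT⟩ := hsol
  obtain ⟨ceps, hceps, heps⟩ := P.heps_lb
  obtain ⟨cl, hcl, hlamlb⟩ := P.hlam_lb
  obtain ⟨Ml, hlamub⟩ := P.hlam_ub
  obtain ⟨Mb, hbetab⟩ := P.hbeta_bdd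
  obtain ⟨Mth, hthetab⟩ := P.htheta_bdd
  obtain ⟨Mldash, hlam'b⟩ := P.hlam'_bdd
  have hT := P.hT
  have h0T : (0:ℝ) ∈ Icc (0:ℝ) P.T := ⟨le_refl 0, hT.le⟩
  have hTT : P.T ∈ Icc (0:ℝ) P.T := ⟨hT.le, le_refl _⟩
  -- point facts
  have heps_pos : ∀ t ∈ Icc (0:ℝ) P.T, 0 < P.eps t := fun t ht => lt_of_lt_of_le hceps (heps t ht)
  have hepsi_pos : ∀ t ∈ Icc (0:ℝ) P.T, 0 < (P.eps t)⁻¹ := fun t ht => inv_pos.2 (heps_pos t ht)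
  have hlam_pos : ∀ t ∈ Icc (0:ℝ) P.T, 0 < P.lam t := fun t ht => lt_of_lt_of_le hcl (hlamlb t ht)
  have hlam_ne : ∀ t ∈ Icc (0:ℝ) P.T, P.lam t ≠ 0 := fun t ht => (hlam_pos t ht).ne'
  -- shorthand quantities
  set u : ℝ → ℝ := fun t => A t + P.lam t * B t with hu_def
  set v : ℝ → ℝ := fun t => B t + P.lam t * C t with hv_def
  set w : ℝ → ℝ := fun t => P.lam t * C t - 1 with hw_def
  set dl : ℝ → ℝ := fun t => A t * C t - B t ^ 2 with hdl_def
  set ze : ℝ → ℝ := fun t => A t + 2 * P.lam t * B t + P.lam t ^ 2 * C t with hze_def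
  set ps : ℝ → ℝ := fun t => B t - E t with hps_def
  set nn : ℝ → ℝ := fun t => (A t - D t) + P.lam t * (B t - E t) with hnn_def
  -- continuity
  have hlamc : Continuous P.lam := by
    rw [continuous_iff_continuousAt]; exact fun t => (P.hlam_deriv t).continuousAt
  have hAc : ContinuousOn A (Icc 0 P.T) := fun t ht => (hA t ht).continuousAt.continuousWithinAt
  have hBc : ContinuousOn B (Icc 0 P.T) := fun t ht => (hB t ht).continuousAt.continuousWithinAt
  have hCc : ContinuousOn C (Icc 0 P.T) := fun t ht => (hC t ht).continuousAt.continuousWithinAt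
  have hDc : ContinuousOn D (Icc 0 P.T) := fun t ht => (hD t ht).continuousAt.continuousWithinAt
  have hEc : ContinuousOn E (Icc 0 P.T) := fun t ht => (hE t ht).continuousAt.continuousWithinAt
  have hlc : ContinuousOn P.lam (Icc 0 P.T) := hlamc.continuousOn
  have huc : ContinuousOn u (Icc 0 P.T) := hAc.add (hlc.mul hBc)
  have hvc : ContinuousOn v (Icc 0 P.T) := hBc.add (hlc.mul hCc)
  have hwc : ContinuousOn w (Icc 0 P.T) := (hlc.mul hCc).sub continuousOn_const
  have hdlc : ContinuousOn dl (Icc 0 P.T) := (hAc.mul hCc).sub (hBc.pow 2)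
  have hzec : ContinuousOn ze (Icc 0 P.T) :=
    (hAc.add ((continuousOn_const.mul hlc).mul hBc)).add ((hlc.pow 2).mul hCc)
  have hpsc : ContinuousOn ps (Icc 0 P.T) := hBc.sub hEc
  have hnnc : ContinuousOn nn (Icc 0 P.T) := (hAc.sub hDc).add (hlc.mul (hBc.sub hEc))
  -- derivative identities
  have hw' : ∀ t ∈ Icc (0:ℝ) P.T, HasDerivAt w
      ((P.eps t)⁻¹ * P.lam t * v t ^ 2 + (2 * P.beta t + gammaDot P t) * w t) t := by
    intro t ht
    have h1 := ((P.hlam_deriv t).mul (hC t ht)).sub_const 1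
    refine h1.congr_deriv (Eq.symm ?_)
    simp only [hw_def, hv_def, gammaDot]
    field_simp [hlam_ne t ht]
    ring
  have hu' : ∀ t ∈ Icc (0:ℝ) P.T, HasDerivAt u
      ((P.eps t)⁻¹ * ze t * u t + (P.beta t + gammaDot P t) * P.lam t * B t) t := by
    intro t ht
    have h1 := (hA t ht).add ((P.hlam_deriv t).mul (hB t ht))
    refine h1.congr_deriv (Eq.symm ?_)
    simp only [hu_def, hze_def, gammaDot]
    field_simp [hlam_ne t ht]
    ring
  have hdl' : ∀ t ∈ Icc (0:ℝ) P.T, HasDerivAt dl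
      ((P.eps t)⁻¹ * ze t * dl t + 2 * P.beta t * dl t
        - (P.lam t)⁻¹ * (2 * P.beta t + gammaDot P t) * A t) t := by
    intro t ht
    have h1 := ((hA t ht).mul (hC t ht)).sub ((hB t ht).pow 2)
    refine h1.congr_deriv (Eq.symm ?_)
    simp only [hdl_def, hze_def, gammaDot]
    ring
  have hps' : ∀ t ∈ Icc (0:ℝ) P.T, HasDerivAt ps
      ((P.eps t)⁻¹ * v t * nn t + (P.theta t + P.beta t) * ps t) t := by
    intro t ht
    have h1 := (hB t ht).sub (hE t ht)
    refine h1.congr_deriv (Eq.symm ?_)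
    simp only [hps_def, hnn_def, hv_def]
    ring
  have hnn' : ∀ t ∈ Icc (0:ℝ) P.T, HasDerivAt nn
      (((P.eps t)⁻¹ * ze t + P.theta t) * nn t + (P.beta t + gammaDot P t) * P.lam t * ps t) t := by
    intro t ht
    have h1 := ((hA t ht).sub (hD t ht)).add
      ((P.hlam_deriv t).mul ((hB t ht).sub (hE t ht)))
    refine h1.congr_deriv (Eq.symm ?_)
    simp only [hnn_def, hze_def, hps_def, gammaDot, Pi.sub_apply]
    field_simp [hlam_ne t ht]
    ring
  have hv' : ∀ t ∈ Icc (0:ℝ) P.T, HasDerivAt v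
      ((P.eps t)⁻¹ * v t * ze t + P.beta t * B t
        + (2 * P.beta t + gammaDot P t) * (P.lam t * C t) - (2 * P.beta t + gammaDot P t)) t := by
    intro t ht
    have h1 := (hB t ht).add ((P.hlam_deriv t).mul (hC t ht))
    refine h1.congr_deriv (Eq.symm ?_)
    simp only [hv_def, hze_def, gammaDot]
    field_simp [hlam_ne t ht]
    ring
  -- global bounds
  obtain ⟨Mz, hMz⟩ := (isCompact_Icc).exists_bound_of_continuousOn hzec
  obtain ⟨Mv, hMv⟩ := (isCompact_Icc).exists_bound_of_continuousOn hvc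
  simp only [Real.norm_eq_abs] at hMz hMv
  have habs_mul : ∀ a b Ka Kb : ℝ, |a| ≤ Ka → |b| ≤ Kb → |a * b| ≤ Ka * Kb := by
    intro a b Ka Kb h1 h2
    rw [abs_mul]
    exact mul_le_mul h1 h2 (abs_nonneg _) (le_trans (abs_nonneg _) h1)
  have hepsi_le : ∀ t ∈ Icc (0:ℝ) P.T, |(P.eps t)⁻¹| ≤ ceps⁻¹ := by
    intro t ht
    rw [abs_of_pos (hepsi_pos t ht)]
    exact inv_anti₀ hceps (heps t ht)
  have hgd_le : ∀ t ∈ Icc (0:ℝ) P.T, |gammaDot P t| ≤ Mldash / cl := by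
    intro t ht
    rw [gammaDot, abs_div]
    refine div_le_div₀ (le_trans (abs_nonneg _) (hlam'b t)) (hlam'b t) hcl ?_
    rw [abs_of_pos (hlam_pos t ht)]
    exact hlamlb t ht
  have hlam_le : ∀ t ∈ Icc (0:ℝ) P.T, |P.lam t| ≤ Ml := by
    intro t ht
    rw [abs_of_pos (hlam_pos t ht)]
    exact hlamub t ht
  -- terminal values
  have huT : u P.T = 0 := by simp [hu_def, hAT, hBT]
  have hvT : v P.T = 0 := by
    simp only [hv_def, hBT, hCT]
    rw [mul_inv_cancel₀ (hlam_ne P.T hTT)]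
    ring
  have hwT : w P.T = 0 := by
    simp only [hw_def, hCT]
    field_simp [hlam_ne P.T hTT]
    norm_num
  have hdlT : dl P.T = 0 := by
    simp only [hdl_def, hAT, hBT, hCT]
    field_simp [hlam_ne P.T hTT]
    norm_num
  have hpsT : ps P.T = -1 := by simp [hps_def, hBT, hET]
  have hnnT : nn P.T = 0 := by
    simp only [hnn_def, hAT, hBT, hDT, hET]
    ring
  -- Step 1 : w ≤ 0 on [0,T]
  have hwle : ∀ t ∈ Icc (0:ℝ) P.T, w t ≤ 0 := by
    intro t₀ ht₀
    by_contra hcon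
    push_neg at hcon
    have ht₀T : t₀ < P.T := by
      rcases lt_or_eq_of_le ht₀.2 with h | h
      · exact h
      · exfalso; rw [h, hwT] at hcon; linarith
    set Z : Set ℝ := Icc t₀ P.T ∩ w ⁻¹' {0} with hZ
    have hZclosed : IsClosed Z :=
      (hwc.mono (Icc_subset_Icc ht₀.1 (le_refl _))).preimage_isClosed_of_isClosed
        isClosed_Icc isClosed_singleton
    have hZne : Z.Nonempty := ⟨P.T, ⟨ht₀T.le, le_refl _⟩, hwT⟩
    have hZbdd : BddBelow Z := ⟨t₀, fun z hz => hz.1.1⟩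
    set t₁ := sInf Z with ht₁def
    have ht₁Z : t₁ ∈ Z := hZclosed.csInf_mem hZne hZbdd
    have ht₁0 : w t₁ = 0 := ht₁Z.2
    have ht₀₁ : t₀ < t₁ := by
      rcases lt_or_eq_of_le ht₁Z.1.1 with h | h
      · exact h
      · exfalso; rw [← h] at ht₁0; linarith
    have hIccsub : Icc t₀ t₁ ⊆ Icc (0:ℝ) P.T := Icc_subset_Icc ht₀.1 ht₁Z.1.2
    have hwpos : ∀ s ∈ Ico t₀ t₁, 0 < w s := by
      intro s hs
      by_contra hws
      push_neg at hws
      rcases lt_or_eq_of_le hws with h | h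
      · obtain ⟨z, hz, hz0⟩ := intermediate_value_Icc' hs.1
          (hwc.mono (Icc_subset_Icc ht₀.1 (le_trans hs.2.le ht₁Z.1.2)))
          (⟨h.le, hcon.le⟩ : (0:ℝ) ∈ Icc (w s) (w t₀))
        have : t₁ ≤ z := csInf_le hZbdd ⟨⟨hz.1, le_trans hz.2 (le_trans hs.2.le ht₁Z.1.2)⟩, hz0⟩
        linarith [hz.2, hs.2]
      · have : t₁ ≤ s := csInf_le hZbdd ⟨⟨hs.1, le_trans hs.2.le ht₁Z.1.2⟩, mem_singleton_iff.2 h⟩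
        linarith [hs.2]
    obtain ⟨c, hc, hceq⟩ := exists_hasDerivAt_eq_slope w
      (fun s => (P.eps s)⁻¹ * P.lam s * v s ^ 2 + (2 * P.beta s + gammaDot P s) * w s)
      ht₀₁ (hwc.mono hIccsub)
      (fun s hs => hw' s (hIccsub (Ioo_subset_Icc_self hs)))
    have hcT : c ∈ Icc (0:ℝ) P.T := hIccsub (Ioo_subset_Icc_self hc)
    have hceq' : (P.eps c)⁻¹ * P.lam c * v c ^ 2 + (2 * P.beta c + gammaDot P c) * w c
        = (w t₁ - w t₀) / (t₁ - t₀) := hceq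
    have h1 : 0 < (P.eps c)⁻¹ * P.lam c * v c ^ 2 + (2 * P.beta c + gammaDot P c) * w c := by
      have hna : 0 < 2 * P.beta c + gammaDot P c := by
        simp only [gammaDot]; exact P.hnoarb c hcT
      have h3 := mul_pos hna (hwpos c ⟨hc.1.le, hc.2⟩)
      have h2 : 0 ≤ (P.eps c)⁻¹ * P.lam c * v c ^ 2 :=
        mul_nonneg (mul_nonneg (hepsi_pos c hcT).le (hlam_pos c hcT).le) (sq_nonneg _)
      exact add_pos_of_nonneg_of_pos h2 h3
    rw [hceq', ht₁0] at h1
    have h4 : (0 - w t₀) / (t₁ - t₀) < 0 := div_neg_of_neg_of_pos (by linarith) (by linarith)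
    linarith
  -- Step 2 : dl > 0 and C > 0 on [0,T)
  have hdlC : ∀ t, 0 ≤ t → t < P.T → 0 < dl t ∧ 0 < C t := by
    have hnaT : 0 < 2 * P.beta P.T + gammaDot P P.T := by
      simp only [gammaDot]; exact P.hnoarb P.T hTT
    have hdlT'neg : (P.eps P.T)⁻¹ * ze P.T * dl P.T + 2 * P.beta P.T * dl P.T
        - (P.lam P.T)⁻¹ * (2 * P.beta P.T + gammaDot P P.T) * A P.T < 0 := by
      rw [hdlT, hAT]
      have h3 : (P.eps P.T)⁻¹ * ze P.T * 0 + 2 * P.beta P.T * 0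
          - (P.lam P.T)⁻¹ * (2 * P.beta P.T + gammaDot P P.T) * P.lam P.T
          = -(2 * P.beta P.T + gammaDot P P.T) := by
        field_simp [hlam_ne P.T hTT]
        ring
      rw [h3]
      linarith
    obtain ⟨a1, ha1T, ha1⟩ := aux_pos_left_of_deriv_neg (hdl' P.T hTT) hdlT hdlT'neg
    obtain ⟨a2, ha2T, ha2⟩ := aux_pos_left_of_pos hT (hCc P.T hTT)
      (by rw [hCT]; exact inv_pos.2 (hlam_pos P.T hTT))
    have ha0 : (0:ℝ) ≤ max a1 (max a2 0) := le_trans (le_max_right a2 0) (le_max_right _ _)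
    have haT : max a1 (max a2 0) < P.T := max_lt ha1T (max_lt ha2T hT)
    have hnear : ∀ s ∈ Ioo (max a1 (max a2 0)) P.T, 0 < min (dl s) (C s) := by
      intro s hs
      exact lt_min (ha1 s ⟨lt_of_le_of_lt (le_max_left _ _) hs.1, hs.2⟩)
        (ha2 s ⟨lt_of_le_of_lt (le_trans (le_max_left a2 0) (le_max_right a1 _)) hs.1, hs.2⟩)
    have hstep : ∀ t, 0 ≤ t → t < P.T → min (dl t) (C t) = 0 →
        (∀ s ∈ Ioo t P.T, 0 < min (dl s) (C s)) → False := by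
      intro t ht0 htT hmin0 hright
      have htI : t ∈ Icc (0:ℝ) P.T := ⟨ht0, htT.le⟩
      have hdlge : 0 ≤ dl t := by rw [← hmin0]; exact min_le_left _ _
      have hCge : 0 ≤ C t := by rw [← hmin0]; exact min_le_right _ _
      have hdlright : ∀ s ∈ Ioo t P.T, 0 < dl s :=
        fun s hs => lt_of_lt_of_le (hright s hs) (min_le_left _ _)
      have hCright : ∀ s ∈ Ioo t P.T, 0 < C s :=
        fun s hs => lt_of_lt_of_le (hright s hs) (min_le_right _ _)
      have hna : 0 < 2 * P.beta t + gammaDot P t := by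
        simp only [gammaDot]; exact P.hnoarb t htI
      have hlpos := hlam_pos t htI
      rcases eq_or_lt_of_le hCge with hC0 | hC0
      · -- C t = 0
        have hC0 : C t = 0 := hC0.symm
        have hBt : B t = 0 := by
          have h1 : dl t = -B t ^ 2 := by simp only [hdl_def]; rw [hC0]; ring
          have h2 : B t ^ 2 ≤ 0 := by rw [h1] at hdlge; linarith
          have h3 : B t ^ 2 = 0 := le_antisymm h2 (sq_nonneg _)
          exact pow_eq_zero_iff (by norm_num) |>.1 h3
        have hCd := aux_deriv_nonneg_right (hC t htI) htT hC0 (fun s hs => (hCright s hs).le)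
        rw [hBt, hC0] at hCd
        have hCd' : (0:ℝ) ≤ -((P.lam t)⁻¹ * (2 * P.beta t + gammaDot P t)) := by
          simpa using hCd
        linarith [mul_pos (inv_pos.2 hlpos) hna]
      · -- C t > 0, hence dl t = 0
        have hdl0 : dl t = 0 := by
          rcases eq_or_lt_of_le hdlge with h | h
          · exact h.symm
          · exfalso
            have h2 := lt_min h hC0
            rw [hmin0] at h2
            exact lt_irrefl 0 h2
        have hdld := aux_deriv_nonneg_right (hdl' t htI) htT hdl0
          (fun s hs => (hdlright s hs).le)
        rw [hdl0] at hdld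
        have hAle : A t ≤ 0 := by
          by_contra hA0
          push_neg at hA0
          have h5 := mul_pos (mul_pos (inv_pos.2 hlpos) hna) hA0
          linarith [hdld]
        have hABC : A t * C t - B t ^ 2 = 0 := by
          simpa [hdl_def] using hdl0
        have hBt : B t = 0 := by
          have h8 : A t * C t ≤ 0 := mul_nonpos_of_nonpos_of_nonneg hAle hCge
          have h9 : B t ^ 2 = 0 := le_antisymm (by linarith) (sq_nonneg _)
          exact pow_eq_zero_iff (by norm_num) |>.1 h9
        have hAt : A t = 0 := by
          have h6 : A t * C t = 0 := by rw [hBt] at hABC; linarith [hABC]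
          rcases mul_eq_zero.1 h6 with h | h
          · exact h
          · exact absurd h (ne_of_gt hC0)
        have hut : u t = 0 := by simp only [hu_def]; rw [hAt, hBt]; ring
        -- uniqueness for the linear system in (u, B) forces B ≡ 0, contradiction with B T = -1
        have hbound : ∀ s ∈ Icc t P.T,
            |(P.eps s)⁻¹ * ze s * u s + (P.beta s + gammaDot P s) * P.lam s * B s|
              ≤ (max (ceps⁻¹ * Mz + (Mb + Mldash / cl) * Ml) (ceps⁻¹ * Mv + Mb))
                  * max |u s| |B s| ∧
            |(P.eps s)⁻¹ * (A s + P.lam s * B s) * (B s + P.lam s * C s) + P.beta s * B s|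
              ≤ (max (ceps⁻¹ * Mz + (Mb + Mldash / cl) * Ml) (ceps⁻¹ * Mv + Mb))
                  * max |u s| |B s| := by
          intro s hs
          have hsI : s ∈ Icc (0:ℝ) P.T := ⟨le_trans ht0 hs.1, hs.2⟩
          have hmaxnn : (0:ℝ) ≤ max |u s| |B s| := le_trans (abs_nonneg _) (le_max_left _ _)
          constructor
          · have h1 : |(P.eps s)⁻¹ * ze s| ≤ ceps⁻¹ * Mz :=
              habs_mul _ _ _ _ (hepsi_le s hsI) (hMz s hsI)
            have h2 : |(P.beta s + gammaDot P s) * P.lam s| ≤ (Mb + Mldash / cl) * Ml := by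
              refine habs_mul _ _ _ _ ?_ (hlam_le s hsI)
              exact le_trans (abs_add_le _ _) (add_le_add (hbetab s hsI) (hgd_le s hsI))
            have h3 : (P.eps s)⁻¹ * ze s * u s + (P.beta s + gammaDot P s) * P.lam s * B s
                = ((P.eps s)⁻¹ * ze s) * u s + ((P.beta s + gammaDot P s) * P.lam s) * B s := by
              ring
            rw [h3]
            exact le_trans (aux_lin_bound h1 h2)
              (mul_le_mul_of_nonneg_right (le_max_left _ _) hmaxnn)
          · have h1 : |(P.eps s)⁻¹ * v s| ≤ ceps⁻¹ * Mv :=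
              habs_mul _ _ _ _ (hepsi_le s hsI) (hMv s hsI)
            have h2 : |P.beta s| ≤ Mb := hbetab s hsI
            have h3 : (P.eps s)⁻¹ * (A s + P.lam s * B s) * (B s + P.lam s * C s)
                  + P.beta s * B s
                = ((P.eps s)⁻¹ * v s) * u s + P.beta s * B s := by
              simp only [hu_def, hv_def]; ring
            rw [h3]
            exact le_trans (aux_lin_bound h1 h2)
              (mul_le_mul_of_nonneg_right (le_max_right _ _) hmaxnn)
        have hzero := aux_pair_eq_zero (x := u) (y := B)
          (x' := fun s => (P.eps s)⁻¹ * ze s * u s + (P.beta s + gammaDot P s) * P.lam s * B s)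
          (y' := fun s => (P.eps s)⁻¹ * (A s + P.lam s * B s) * (B s + P.lam s * C s)
            + P.beta s * B s)
          (a := t) (b := P.T)
          (fun s hs => hu' s (Icc_subset_Icc ht0 le_rfl hs))
          (fun s hs => hB s (Icc_subset_Icc ht0 le_rfl hs))
          hbound hut hBt
        have hfin := (hzero P.T ⟨htT.le, le_rfl⟩).2
        rw [hBT] at hfin
        norm_num at hfin
    have key := aux_backward_pos (f := fun s => min (dl s) (C s)) (T := P.T)
      (by exact hdlc.inf hCc) ha0 haT hnear hstep
    intro t ht0 htT
    have h7 := key t ht0 htT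
    exact ⟨lt_of_lt_of_le h7 (min_le_left _ _), lt_of_lt_of_le h7 (min_le_right _ _)⟩
  -- Step 3 : v > 0 on [0,T)
  have hvpos : ∀ t, 0 ≤ t → t < P.T → 0 < v t := by
    have hvT'neg : (P.eps P.T)⁻¹ * v P.T * ze P.T + P.beta P.T * B P.T
        + (2 * P.beta P.T + gammaDot P P.T) * (P.lam P.T * C P.T)
        - (2 * P.beta P.T + gammaDot P P.T) < 0 := by
      rw [hvT, hBT, hCT, mul_inv_cancel₀ (hlam_ne P.T hTT)]
      have hb := P.hbeta_pos P.T hTT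
      simp only [mul_zero, zero_mul, zero_add, mul_one, mul_neg_one]
      linarith
    obtain ⟨a1, ha1T, ha1⟩ := aux_pos_left_of_deriv_neg (hv' P.T hTT) hvT hvT'neg
    have ha0 : (0:ℝ) ≤ max a1 0 := le_max_right _ _
    have haT : max a1 0 < P.T := max_lt ha1T hT
    have hnear : ∀ s ∈ Ioo (max a1 0) P.T, 0 < v s := fun s hs =>
      ha1 s ⟨lt_of_le_of_lt (le_max_left _ _) hs.1, hs.2⟩
    have hstep : ∀ t, 0 ≤ t → t < P.T → v t = 0 → (∀ s ∈ Ioo t P.T, 0 < v s) → False := by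
      intro t ht0 htT hvt0 hright
      have htI : t ∈ Icc (0:ℝ) P.T := ⟨ht0, htT.le⟩
      have hvd := aux_deriv_nonneg_right (hv' t htI) htT hvt0 (fun s hs => (hright s hs).le)
      rw [hvt0] at hvd
      have hBeq : B t = -(P.lam t * C t) := by
        have : B t + P.lam t * C t = 0 := hvt0
        linarith
      rw [hBeq] at hvd
      -- hvd : 0 ≤ εi*0*ze + β*(-(λC)) + (2β+γ̇)(λC) - (2β+γ̇)
      have hna : 0 < 2 * P.beta t + gammaDot P t := by
        simp only [gammaDot]; exact P.hnoarb t htI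
      have hb := P.hbeta_pos t htI
      have hLpos : 0 < P.lam t * C t := mul_pos (hlam_pos t htI) (hdlC t ht0 htT).2
      have hwle0 : P.lam t * C t - 1 ≤ 0 := hwle t htI
      have hprod : (2 * P.beta t + gammaDot P t) * (P.lam t * C t - 1) ≤ 0 :=
        mul_nonpos_of_nonneg_of_nonpos hna.le hwle0
      nlinarith [mul_pos hb hLpos, hvd]
    have key := aux_backward_pos (f := v) (T := P.T) hvc ha0 haT hnear hstep
    exact key
  -- basic facts at time 0
  have hv0 := hvpos 0 le_rfl hT
  have hw0 : P.lam 0 * C 0 - 1 ≤ 0 := hwle 0 h0T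
  have hC0pos : 0 < C 0 := (hdlC 0 le_rfl hT).2
  have hdl0pos : 0 < A 0 * C 0 - B 0 ^ 2 := by
    have := (hdlC 0 le_rfl hT).1
    simpa [hdl_def] using this
  have hl0 := hlam_pos 0 h0T
  have hei0 := hepsi_pos 0 h0T
  have hl0ne := hlam_ne 0 h0T
  -- Goal 1
  have hS : 0 < B 0 + lam0m * C 0 + (1 - lam0m / P.lam 0) := by
    have hkey : P.lam 0 * (B 0 + lam0m * C 0 + (1 - lam0m / P.lam 0))
        = P.lam 0 * v 0 + (P.lam 0 - lam0m) * (1 - P.lam 0 * C 0) := by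
      simp only [hv_def]
      field_simp
      ring
    have h1 : 0 ≤ (P.lam 0 - lam0m) * (1 - P.lam 0 * C 0) :=
      mul_nonneg (by linarith) (by linarith)
    have h2 : 0 < P.lam 0 * v 0 := mul_pos hl0 hv0
    have h3 : 0 < P.lam 0 * (B 0 + lam0m * C 0 + (1 - lam0m / P.lam 0)) := by
      rw [hkey]; linarith
    by_contra hcon
    push_neg at hcon
    nlinarith
  have goal1 : g0m + eta0m < 0 := by
    have heq : g0m + eta0m
        = -((P.eps 0)⁻¹ * (B 0 + lam0m * C 0 + (1 - lam0m / P.lam 0))) := by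
      rw [hg0m, heta0m]; ring
    rw [heq]
    have := mul_pos hei0 hS
    linarith
  -- Goal 2
  have goal2 : 0 < r := by
    have hq1 : 0 < A 0 + 2 * lam0m * B 0 + lam0m ^ 2 * C 0 := by
      nlinarith [sq_nonneg (lam0m * C 0 + B 0), hdl0pos, hC0pos]
    have hq2 : 0 ≤ lam0m * (1 - lam0m / P.lam 0) := by
      have : lam0m / P.lam 0 ≤ 1 := (div_le_one hl0).2 hlam0m_le
      have h1 : 0 ≤ 1 - lam0m / P.lam 0 := by linarith
      exact mul_nonneg hlam0m_pos.le h1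
    have hr_eq : r = (P.eps 0)⁻¹ * (A 0 + 2 * lam0m * B 0 + lam0m ^ 2 * C 0
        + lam0m * (1 - lam0m / P.lam 0)) := by
      rw [hr, hf0m, hg0m, heta0m]; ring
    rw [hr_eq]
    exact mul_pos hei0 (by linarith)
  refine ⟨goal1, goal2, ?_⟩
  intro hbg
  -- Step 4 : nn > 0 and ps < 0 on [0,T)
  have hnn_ps : ∀ t, 0 ≤ t → t < P.T → 0 < nn t ∧ ps t < 0 := by
    have hbgT : 0 < P.beta P.T + gammaDot P P.T := hbg P.T hTT
    have hnnT'neg : ((P.eps P.T)⁻¹ * ze P.T + P.theta P.T) * nn P.T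
        + (P.beta P.T + gammaDot P P.T) * P.lam P.T * ps P.T < 0 := by
      rw [hnnT, hpsT]
      simp only [mul_zero, zero_add, mul_neg_one]
      have h2 := mul_pos hbgT (hlam_pos P.T hTT)
      linarith
    obtain ⟨a1, ha1T, ha1⟩ := aux_pos_left_of_deriv_neg (hnn' P.T hTT) hnnT hnnT'neg
    obtain ⟨a2, ha2T, ha2⟩ := aux_pos_left_of_pos (f := fun s => -ps s) hT
      (by exact (hpsc.neg) P.T hTT) (by show (0:ℝ) < -ps P.T; rw [hpsT]; norm_num)
    have ha0 : (0:ℝ) ≤ max a1 (max a2 0) := le_trans (le_max_right a2 0) (le_max_right _ _)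
    have haT : max a1 (max a2 0) < P.T := max_lt ha1T (max_lt ha2T hT)
    have hnear : ∀ s ∈ Ioo (max a1 (max a2 0)) P.T, 0 < min (nn s) (-ps s) := by
      intro s hs
      exact lt_min (ha1 s ⟨lt_of_le_of_lt (le_max_left _ _) hs.1, hs.2⟩)
        (ha2 s ⟨lt_of_le_of_lt (le_trans (le_max_left a2 0) (le_max_right a1 _)) hs.1, hs.2⟩)
    have hstep : ∀ t, 0 ≤ t → t < P.T → min (nn t) (-ps t) = 0 →
        (∀ s ∈ Ioo t P.T, 0 < min (nn s) (-ps s)) → False := by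
      intro t ht0 htT hmin0 hright
      have htI : t ∈ Icc (0:ℝ) P.T := ⟨ht0, htT.le⟩
      have hnge : 0 ≤ nn t := by rw [← hmin0]; exact min_le_left _ _
      have hpge : 0 ≤ -ps t := by rw [← hmin0]; exact min_le_right _ _
      have hnright : ∀ s ∈ Ioo t P.T, 0 < nn s :=
        fun s hs => lt_of_lt_of_le (hright s hs) (min_le_left _ _)
      have hpright : ∀ s ∈ Ioo t P.T, ps s ≤ 0 := by
        intro s hs
        have := lt_of_lt_of_le (hright s hs) (min_le_right _ _)
        linarith
      have hbgt : 0 < P.beta t + gammaDot P t := hbg t htI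
      have hboth : nn t = 0 ∧ ps t = 0 := by
        rcases eq_or_lt_of_le hnge with hn0 | hn0
        · have hn0 : nn t = 0 := hn0.symm
          have hnd := aux_deriv_nonneg_right (hnn' t htI) htT hn0
            (fun s hs => (hnright s hs).le)
          rw [hn0] at hnd
          have hps0 : ps t = 0 := by
            by_contra hne
            have hlt : ps t < 0 := lt_of_le_of_ne (by linarith) hne
            have h5 : ((P.eps t)⁻¹ * ze t + P.theta t) * 0
                + (P.beta t + gammaDot P t) * P.lam t * ps t < 0 := by
              rw [mul_zero, zero_add]
              exact mul_neg_of_pos_of_neg (mul_pos hbgt (hlam_pos t htI)) hlt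
            exact absurd hnd (not_le.2 h5)
          exact ⟨hn0, hps0⟩
        · have hp0 : ps t = 0 := by
            rcases eq_or_lt_of_le hpge with h | h
            · linarith [h]
            · exfalso
              have h2 := lt_min hn0 h
              rw [hmin0] at h2
              exact lt_irrefl 0 h2
          have hpd := aux_deriv_nonpos_right (hps' t htI) htT hp0 hpright
          rw [hp0] at hpd
          have hvp := hvpos t ht0 htT
          exfalso
          have h7 : 0 < (P.eps t)⁻¹ * v t * nn t + (P.theta t + P.beta t) * 0 := by
            rw [mul_zero, add_zero]
            exact mul_pos (mul_pos (hepsi_pos t htI) hvp) hn0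
          exact absurd hpd (not_le.2 h7)
      obtain ⟨hn0, hp0⟩ := hboth
      have hbound : ∀ s ∈ Icc t P.T,
          |((P.eps s)⁻¹ * ze s + P.theta s) * nn s
              + (P.beta s + gammaDot P s) * P.lam s * ps s|
            ≤ (max (ceps⁻¹ * Mz + Mth + (Mb + Mldash / cl) * Ml) (ceps⁻¹ * Mv + (Mth + Mb)))
                * max |nn s| |ps s| ∧
          |(P.eps s)⁻¹ * v s * nn s + (P.theta s + P.beta s) * ps s|
            ≤ (max (ceps⁻¹ * Mz + Mth + (Mb + Mldash / cl) * Ml) (ceps⁻¹ * Mv + (Mth + Mb)))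
                * max |nn s| |ps s| := by
        intro s hs
        have hsI : s ∈ Icc (0:ℝ) P.T := ⟨le_trans ht0 hs.1, hs.2⟩
        have hmaxnn : (0:ℝ) ≤ max |nn s| |ps s| := le_trans (abs_nonneg _) (le_max_left _ _)
        constructor
        · have h1 : |(P.eps s)⁻¹ * ze s + P.theta s| ≤ ceps⁻¹ * Mz + Mth :=
            le_trans (abs_add_le _ _)
              (add_le_add (habs_mul _ _ _ _ (hepsi_le s hsI) (hMz s hsI)) (hthetab s hsI))
          have h2 : |(P.beta s + gammaDot P s) * P.lam s| ≤ (Mb + Mldash / cl) * Ml := by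
            refine habs_mul _ _ _ _ ?_ (hlam_le s hsI)
            exact le_trans (abs_add_le _ _) (add_le_add (hbetab s hsI) (hgd_le s hsI))
          have h3 : ((P.eps s)⁻¹ * ze s + P.theta s) * nn s
                + (P.beta s + gammaDot P s) * P.lam s * ps s
              = ((P.eps s)⁻¹ * ze s + P.theta s) * nn s
                + ((P.beta s + gammaDot P s) * P.lam s) * ps s := by ring
          rw [h3]
          exact le_trans (aux_lin_bound h1 h2)
            (mul_le_mul_of_nonneg_right (le_max_left _ _) hmaxnn)
        · have h1 : |(P.eps s)⁻¹ * v s| ≤ ceps⁻¹ * Mv :=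
            habs_mul _ _ _ _ (hepsi_le s hsI) (hMv s hsI)
          have h2 : |P.theta s + P.beta s| ≤ Mth + Mb :=
            le_trans (abs_add_le _ _) (add_le_add (hthetab s hsI) (hbetab s hsI))
          have h3 : (P.eps s)⁻¹ * v s * nn s + (P.theta s + P.beta s) * ps s
              = ((P.eps s)⁻¹ * v s) * nn s + (P.theta s + P.beta s) * ps s := by ring
          rw [h3]
          exact le_trans (aux_lin_bound h1 h2)
            (mul_le_mul_of_nonneg_right (le_max_right _ _) hmaxnn)
      have hzero := aux_pair_eq_zero (x := nn) (y := ps)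
        (x' := fun s => ((P.eps s)⁻¹ * ze s + P.theta s) * nn s
          + (P.beta s + gammaDot P s) * P.lam s * ps s)
        (y' := fun s => (P.eps s)⁻¹ * v s * nn s + (P.theta s + P.beta s) * ps s)
        (a := t) (b := P.T)
        (fun s hs => hnn' s (Icc_subset_Icc ht0 le_rfl hs))
        (fun s hs => hps' s (Icc_subset_Icc ht0 le_rfl hs))
        hbound hn0 hp0
      have hfin := (hzero P.T ⟨htT.le, le_rfl⟩).2
      rw [hpsT] at hfin
      norm_num at hfin
    have key := aux_backward_pos (f := fun s => min (nn s) (-ps s)) (T := P.T)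
      (by exact hnnc.inf hpsc.neg) ha0 haT hnear hstep
    intro t ht0 htT
    have h7 := key t ht0 htT
    refine ⟨lt_of_lt_of_le h7 (min_le_left _ _), ?_⟩
    have := lt_of_lt_of_le h7 (min_le_right _ _)
    linarith
  have hn0 : 0 < nn 0 := (hnn_ps 0 le_rfl hT).1
  have hps0 : ps 0 < 0 := (hnn_ps 0 le_rfl hT).2
  have heq : -f0m + h0m = (P.eps 0)⁻¹ * ((A 0 - D 0) + lam0m * (B 0 - E 0)) := by
    rw [hf0m, hh0m]; ring
  rw [heq]
  apply mul_pos hei0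
  have h1 : (A 0 - D 0) + lam0m * (B 0 - E 0) = nn 0 + (lam0m - P.lam 0) * ps 0 := by
    simp only [hnn_def, hps_def]; ring
  rw [h1]
  nlinarith [mul_nonneg (sub_nonneg.2 hlam0m_le) (neg_nonneg.2 hps0.le)]
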